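/- Let H ∈ ℝ^{d×d} be symmetric positive definite, g ∈ ℝ^d, θ_t ∈ ℝ^d, and S ⊆ [d]. The minimizer of θ ↦ ⟨g, θ − θ_t⟩ + (1/2)⟨θ − θ_t, H(θ − θ_t)⟩ over {θ : θ_i = 0 for i ∈ S} is θ*_S = (I − H^{-1} H^S)(θ_t − H^{-1} g), where H^S = I_S^⊤ (I_S H^{-1} I_S^⊤)^{-1} I_S. -/

import Mathlib

open Matrix Finset

/-- The selection matrix `I_S ∈ ℝ^{|S|×d}` whose rows are the standard basis vectors
`eᵢᵀ` for `i ∈ S`. -/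
def selMat {d : ℕ} (S : Finset (Fin d)) : Matrix {i // i ∈ S} (Fin d) ℝ :=
  Matrix.of fun i j => if (i : Fin d) = j then (1 : ℝ) else 0

/-- The matrix `H^S = I_Sᵀ (I_S H⁻¹ I_Sᵀ)⁻¹ I_S`. -/
noncomputable def HmatS {d : ℕ} (H : Matrix (Fin d) (Fin d) ℝ) (S : Finset (Fin d)) :
    Matrix (Fin d) (Fin d) ℝ :=
  (selMat S)ᵀ * (selMat S * H⁻¹ * (selMat S)ᵀ)⁻¹ * selMat S

/-- The diagonal projection matrix `E_S` onto the coordinates in `S`. -/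
def projMat {d : ℕ} (S : Finset (Fin d)) : Matrix (Fin d) (Fin d) ℝ :=
  Matrix.diagonal fun i => if i ∈ S then (1 : ℝ) else 0
lemma selMat_mulVec {d : ℕ} (S : Finset (Fin d)) (v : Fin d → ℝ) (i : {i // i ∈ S}) :
    (selMat S).mulVec v i = v i := by
  simp [selMat, Matrix.mulVec, dotProduct, ite_mul]

lemma selMatT_mulVec_apply {d : ℕ} (S : Finset (Fin d)) (x : {i // i ∈ S} → ℝ)
    (i : {i // i ∈ S}) : ((selMat S)ᵀ.mulVec x) (i : Fin d) = x i := by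
  simp [selMat, Matrix.mulVec, dotProduct, Matrix.transpose_apply, ite_mul,
    Subtype.coe_inj]

lemma selMat_B_posDef {d : ℕ} (H : Matrix (Fin d) (Fin d) ℝ) (hH : H.PosDef)
    (S : Finset (Fin d)) : (selMat S * H⁻¹ * (selMat S)ᵀ).PosDef := by
  have hHinv : H⁻¹.PosDef := hH.inv
  refine Matrix.PosDef.of_dotProduct_mulVec_pos ?_ ?_
  · have h := hHinv.posSemidef.mul_mul_conjTranspose_same (selMat S)
    have hct : (selMat S)ᴴ = (selMat S)ᵀ := by
      ext i j; simp [Matrix.conjTranspose_apply]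
    rw [hct] at h
    exact h.isHermitian
  · intro x hx
    have hAx : (selMat S)ᵀ.mulVec x ≠ 0 := by
      intro h0
      apply hx
      funext i
      have := congrFun h0 (i : Fin d)
      rwa [selMatT_mulVec_apply] at this
    have h := hHinv.dotProduct_mulVec_pos hAx
    rw [star_trivial] at h ⊢
    rw [← Matrix.mulVec_mulVec, ← Matrix.mulVec_mulVec,
      Matrix.dotProduct_mulVec x (selMat S), ← Matrix.mulVec_transpose]
    exact h

lemma selMat_key {d : ℕ} (H : Matrix (Fin d) (Fin d) ℝ) (hH : H.PosDef)
    (S : Finset (Fin d)) : selMat S * (H⁻¹ * HmatS H S) = selMat S := by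
  have hBdet : IsUnit (selMat S * H⁻¹ * (selMat S)ᵀ).det :=
    isUnit_iff_ne_zero.mpr (selMat_B_posDef H hH S).det_pos.ne'
  rw [HmatS]
  have h2 : selMat S * (H⁻¹ * ((selMat S)ᵀ * (selMat S * H⁻¹ * (selMat S)ᵀ)⁻¹ * selMat S))
      = (selMat S * H⁻¹ * (selMat S)ᵀ) *
          ((selMat S * H⁻¹ * (selMat S)ᵀ)⁻¹ * selMat S) := by
    simp only [Matrix.mul_assoc]
  rw [h2, Matrix.mul_nonsing_inv_cancel_left _ _ hBdet]

/-- The unique minimizer of `θ ↦ ⟨g, θ − θ_t⟩ + ½⟨θ − θ_t, H(θ − θ_t)⟩` over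
`{θ : θ_i = 0 for i ∈ S}` is `θ*_S = (I − H⁻¹H^S)(θ_t − H⁻¹g)`. -/
theorem iobs_fixed_mask_minimizer {d : ℕ} (H : Matrix (Fin d) (Fin d) ℝ) (hH : H.PosDef)
    (S : Finset (Fin d)) (g θt θS : Fin d → ℝ)
    (hθS : θS = ((1 : Matrix (Fin d) (Fin d) ℝ) - H⁻¹ * HmatS H S).mulVec
      (θt - H⁻¹.mulVec g)) :
    (∀ i ∈ S, θS i = 0) ∧
      ∀ θ : Fin d → ℝ, (∀ i ∈ S, θ i = 0) → θ ≠ θS →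
        g ⬝ᵥ (θS - θt) + (1 / 2) * ((θS - θt) ⬝ᵥ H.mulVec (θS - θt)) <
          g ⬝ᵥ (θ - θt) + (1 / 2) * ((θ - θt) ⬝ᵥ H.mulVec (θ - θt)) := by
  have A := selMat S
  set w := θt - H⁻¹.mulVec g with hw
  have hHdet : IsUnit H.det := isUnit_iff_ne_zero.mpr hH.det_pos.ne'
  have hkey : selMat S * (H⁻¹ * HmatS H S) = selMat S := selMat_key H hH S
  -- A annihilates θS
  have hAθS : (selMat S).mulVec θS = 0 := by
    rw [hθS, Matrix.mulVec_mulVec, Matrix.mul_sub, Matrix.mul_one, hkey, sub_self,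
      Matrix.zero_mulVec]
  have hzero : ∀ i ∈ S, θS i = 0 := by
    intro i hi
    have := congrFun hAθS ⟨i, hi⟩
    rwa [selMat_mulVec] at this
  refine ⟨hzero, ?_⟩
  intro θ hθ hne
  set δ := θ - θS with hδdef
  have hδ : δ ≠ 0 := sub_ne_zero.mpr hne
  have hAδ : (selMat S).mulVec δ = 0 := by
    funext i
    rw [selMat_mulVec S δ i, Pi.zero_apply, hδdef, Pi.sub_apply, hθ i i.2, hzero i i.2,
      sub_self]
  -- symmetry of H
  have hHsymm : Hᵀ = H := by
    ext i j
    have := congrFun (congrFun hH.1 i) j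
    simpa [Matrix.conjTranspose_apply] using this
  have hsym : ∀ a b : Fin d → ℝ, a ⬝ᵥ H.mulVec b = b ⬝ᵥ H.mulVec a := by
    intro a b
    rw [Matrix.dotProduct_mulVec, dotProduct_comm, ← Matrix.vecMul_transpose, hHsymm]
  -- gradient identity
  have hgrad : g + H.mulVec (θS - θt) = -((HmatS H S).mulVec w) := by
    have h1 : H.mulVec θS = H.mulVec θt - g - (HmatS H S).mulVec w := by
      rw [hθS, Matrix.mulVec_mulVec, Matrix.mul_sub, Matrix.mul_one,
        ← Matrix.mul_assoc, Matrix.mul_nonsing_inv H hHdet, Matrix.one_mul,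
        Matrix.sub_mulVec, hw, Matrix.mulVec_sub, Matrix.mulVec_mulVec,
        Matrix.mul_nonsing_inv H hHdet, Matrix.one_mulVec]
    rw [Matrix.mulVec_sub, h1]
    abel
  -- orthogonality
  have horth : (g + H.mulVec (θS - θt)) ⬝ᵥ δ = 0 := by
    rw [hgrad, HmatS, Matrix.mul_assoc, ← Matrix.mulVec_mulVec,
      neg_dotProduct, dotProduct_comm, Matrix.dotProduct_mulVec,
      Matrix.vecMul_transpose, hAδ, zero_dotProduct, neg_zero]
  -- quadratic expansion
  have hsum : θ - θt = δ + (θS - θt) := by rw [hδdef, sub_add_sub_cancel]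
  have hpos : 0 < δ ⬝ᵥ H.mulVec δ := by
    have := hH.dotProduct_mulVec_pos hδ
    rwa [star_trivial] at this
  have hexp : g ⬝ᵥ (θ - θt) + (1 / 2) * ((θ - θt) ⬝ᵥ H.mulVec (θ - θt)) =
      (g ⬝ᵥ (θS - θt) + (1 / 2) * ((θS - θt) ⬝ᵥ H.mulVec (θS - θt)))
        + (g + H.mulVec (θS - θt)) ⬝ᵥ δ + (1 / 2) * (δ ⬝ᵥ H.mulVec δ) := by
    rw [hsum]
    simp only [dotProduct_add, add_dotProduct, Matrix.mulVec_add]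
    rw [hsym δ (θS - θt), dotProduct_comm (H.mulVec (θS - θt)) δ,
      hsym δ (θS - θt)]
    ring
  rw [hexp, horth]
  linarith
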